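/- Let a, c > 0 and let π : (−π/2, π/2)² → ℝ² be as defined. Suppose Π : (−π/2, π/2)² × ℝ → ℝ² × ℝ, written Π(α, β, φ) = (Π₁(α, β, φ), Θ(α, β, φ)), satisfies: (a) Π₁(α, β, φ) = π(α, β) for all (α, β, φ); and (b) for every forward horizontal curve δ(t) = (α(t), β(t), φ(t)) on W₂ (in coordinates), the curve t ↦ Π(δ(t)) = (x(t), y(t), θ(t)) is a forward horizontal curve on M₂ (in coordinates) up to multiples of 2π in the angular component (i.e. there is a continuous r > 0 with x'(t) = r(t) cos θ(t), y'(t) = r(t) sin θ(t)). Then for every (α, β, φ) at which (π̇¹(α, β, φ), π̇²(α, β, φ)) ≠ (0, 0), the angular component satisfies Θ(α, β, φ) ≡ arg(π̇¹(α, β, φ) + i·π̇²(α, β, φ)) modulo 2π, where arg denotes the argument of a nonzero complex number. In particular, such a map Π is uniquely determined (modulo 2π in the angular component) at all such points. -/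

import Mathlib

/-- First component of the projection map π : (−π/2, π/2)² → ℝ². -/
noncomputable def pi1 (a c α β : ℝ) : ℝ :=
  (a + c) * Real.sin α / (a + Real.cos α * Real.cos β)

/-- Second component of the projection map π : (−π/2, π/2)² → ℝ². -/
noncomputable def pi2 (a c α β : ℝ) : ℝ :=
  (a + c) * Real.cos α * Real.sin β / (a + Real.cos α * Real.cos β)

/-- π̇¹(α, β, φ) = (∂π¹/∂α) cos φ + (∂π¹/∂β) sin φ / cos α. -/
noncomputable def pidot1 (a c α β φ : ℝ) : ℝ :=
  deriv (fun s => pi1 a c s β) α * Real.cos φ +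
    deriv (fun s => pi1 a c α s) β * Real.sin φ / Real.cos α

/-- π̇²(α, β, φ) = (∂π²/∂α) cos φ + (∂π²/∂β) sin φ / cos α. -/
noncomputable def pidot2 (a c α β φ : ℝ) : ℝ :=
  deriv (fun s => pi2 a c s β) α * Real.cos φ +
    deriv (fun s => pi2 a c α s) β * Real.sin φ / Real.cos α

/-- Membership in the coordinate domain (−π/2, π/2)². -/
def InDom (α β : ℝ) : Prop :=
  α ∈ Set.Ioo (-(Real.pi / 2)) (Real.pi / 2) ∧ β ∈ Set.Ioo (-(Real.pi / 2)) (Real.pi / 2)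

/-- The C¹ curve t ↦ (α(t), β(t), φ(t)), with witness c¹, is a forward horizontal
curve on W₂ in coordinates: c¹ is continuous and positive, α' = c¹ cos φ and
β' = c¹ sin φ / cos α. -/
def IsFwdHorW2 (α β φ c1 : ℝ → ℝ) : Prop :=
  ContDiff ℝ 1 α ∧ ContDiff ℝ 1 β ∧ ContDiff ℝ 1 φ ∧
  Continuous c1 ∧ (∀ t, 0 < c1 t) ∧
  (∀ t, HasDerivAt α (c1 t * Real.cos (φ t)) t) ∧
  (∀ t, HasDerivAt β (c1 t * Real.sin (φ t) / Real.cos (α t)) t)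

lemma hd_pi1_a (a c x y : ℝ) (hD : a + Real.cos x * Real.cos y ≠ 0) :
    HasDerivAt (fun s => pi1 a c s y)
      (((a + c) * Real.cos x * (a + Real.cos x * Real.cos y) -
        (a + c) * Real.sin x * (-Real.sin x * Real.cos y)) /
        (a + Real.cos x * Real.cos y) ^ 2) x := by
  unfold pi1
  exact ((Real.hasDerivAt_sin x).const_mul (a + c)).div
    (((Real.hasDerivAt_cos x).mul_const (Real.cos y)).const_add a) hD

lemma hd_pi1_b (a c x y : ℝ) (hD : a + Real.cos x * Real.cos y ≠ 0) :
    HasDerivAt (fun s => pi1 a c x s)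
      ((0 * (a + Real.cos x * Real.cos y) -
        (a + c) * Real.sin x * (Real.cos x * -Real.sin y)) /
        (a + Real.cos x * Real.cos y) ^ 2) y := by
  unfold pi1
  exact (hasDerivAt_const y ((a + c) * Real.sin x)).div
    (((Real.hasDerivAt_cos y).const_mul (Real.cos x)).const_add a) hD

lemma hd_pi2_a (a c x y : ℝ) (hD : a + Real.cos x * Real.cos y ≠ 0) :
    HasDerivAt (fun s => pi2 a c s y)
      (((a + c) * -Real.sin x * Real.sin y * (a + Real.cos x * Real.cos y) -
        (a + c) * Real.cos x * Real.sin y * (-Real.sin x * Real.cos y)) /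
        (a + Real.cos x * Real.cos y) ^ 2) x := by
  unfold pi2
  exact (((Real.hasDerivAt_cos x).const_mul (a + c)).mul_const (Real.sin y)).div
    (((Real.hasDerivAt_cos x).mul_const (Real.cos y)).const_add a) hD

lemma hd_pi2_b (a c x y : ℝ) (hD : a + Real.cos x * Real.cos y ≠ 0) :
    HasDerivAt (fun s => pi2 a c x s)
      (((a + c) * Real.cos x * Real.cos y * (a + Real.cos x * Real.cos y) -
        (a + c) * Real.cos x * Real.sin y * (Real.cos x * -Real.sin y)) /
        (a + Real.cos x * Real.cos y) ^ 2) y := by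
  unfold pi2
  exact ((Real.hasDerivAt_sin y).const_mul ((a + c) * Real.cos x)).div
    (((Real.hasDerivAt_cos y).const_mul (Real.cos x)).const_add a) hD

lemma myabs_int_le {g h : ℝ → ℝ} (hg : Continuous g) (hh : Continuous h)
    (hb : ∀ s, |g s| ≤ h s) (t : ℝ) :
    |∫ s in (0:ℝ)..t, g s| ≤ |∫ s in (0:ℝ)..t, h s| := by
  rcases le_total 0 t with ht | ht
  · calc |∫ s in (0:ℝ)..t, g s| ≤ ∫ s in (0:ℝ)..t, |g s| :=
        intervalIntegral.abs_integral_le_integral_abs ht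
      _ ≤ ∫ s in (0:ℝ)..t, h s :=
        intervalIntegral.integral_mono_on ht (hg.abs.intervalIntegrable _ _)
          (hh.intervalIntegrable _ _) (fun x _ => hb x)
      _ ≤ |∫ s in (0:ℝ)..t, h s| := le_abs_self _
  · rw [intervalIntegral.integral_symm t 0, intervalIntegral.integral_symm t 0 (f := h),
      abs_neg, abs_neg]
    calc |∫ s in t..(0:ℝ), g s| ≤ ∫ s in t..(0:ℝ), |g s| :=
        intervalIntegral.abs_integral_le_integral_abs ht
      _ ≤ ∫ s in t..(0:ℝ), h s :=
        intervalIntegral.integral_mono_on ht (hg.abs.intervalIntegrable _ _)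
          (hh.intervalIntegrable _ _) (fun x _ => hb x)
      _ ≤ |∫ s in t..(0:ℝ), h s| := le_abs_self _

set_option maxHeartbeats 1000000

lemma myarct (t : ℝ) : |Real.arctan t| ≤ 2 := by
  have h1 := Real.arctan_lt_pi_div_two t
  have h2 := Real.neg_pi_div_two_lt_arctan t
  have h3 := Real.pi_le_four
  rw [abs_le]; constructor <;> nlinarith

/-- Uniqueness of the lifted map Π = (Px, Py, Θ): if (a) the spatial components of Π
are the components of π, and (b) Π maps every forward horizontal curve on W₂ to a
forward horizontal curve on M₂ (up to multiples of 2π in the angular component, i.e.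
there is a continuous r > 0 with x' = r cos θ, y' = r sin θ), then wherever
(π̇¹, π̇²) ≠ (0, 0) the angular component satisfies
Θ(α, β, φ) ≡ arg(π̇¹ + i π̇²) (mod 2π). -/
theorem stmt0 (a c : ℝ) (ha : 0 < a) (hc : 0 < c)
    (Px Py Θ : ℝ → ℝ → ℝ → ℝ)
    -- (a): the spatial component of Π equals π
    (hspatial : ∀ α β φ : ℝ, InDom α β →
      Px α β φ = pi1 a c α β ∧ Py α β φ = pi2 a c α β)
    -- (b): Π maps forward horizontal curves on W₂ to forward horizontal curves on M₂
    (hhor : ∀ α β φ c1 : ℝ → ℝ, IsFwdHorW2 α β φ c1 → (∀ t, InDom (α t) (β t)) →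
      ∃ r : ℝ → ℝ, Continuous r ∧ (∀ t, 0 < r t) ∧
        (∀ t, HasDerivAt (fun s => Px (α s) (β s) (φ s))
          (r t * Real.cos (Θ (α t) (β t) (φ t))) t) ∧
        (∀ t, HasDerivAt (fun s => Py (α s) (β s) (φ s))
          (r t * Real.sin (Θ (α t) (β t) (φ t))) t))
    (α β φ : ℝ) (hdom : InDom α β)
    (hne : (pidot1 a c α β φ, pidot2 a c α β φ) ≠ (0, 0)) :
    ∃ k : ℤ, Θ α β φ =
      Complex.arg ((pidot1 a c α β φ : ℂ) + (pidot2 a c α β φ : ℂ) * Complex.I) +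
        2 * Real.pi * k := by
  obtain ⟨⟨hα1, hα2⟩, ⟨hβ1, hβ2⟩⟩ := hdom
  have hαabs : |α| < Real.pi / 2 := abs_lt.2 ⟨hα1, hα2⟩
  have hβabs : |β| < Real.pi / 2 := abs_lt.2 ⟨hβ1, hβ2⟩
  set dα : ℝ := (Real.pi / 2 - |α|) / 2 with hdαdef
  set dβ : ℝ := (Real.pi / 2 - |β|) / 2 with hdβdef
  have hdα : 0 < dα := by rw [hdαdef]; linarith
  have hdβ : 0 < dβ := by rw [hdβdef]; linarith
  set κ : ℝ := Real.cos (|α| + dα) with hκdef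
  have hMα : |α| + dα < Real.pi / 2 := by rw [hdαdef]; linarith
  have hκ : 0 < κ := by
    rw [hκdef]
    apply Real.cos_pos_of_mem_Ioo
    constructor
    · have := Real.pi_pos; have := abs_nonneg α; linarith
    · exact hMα
  set ε : ℝ := min (dα / 2) (dβ * κ / 2) with hεdef
  have hε : 0 < ε := by
    rw [hεdef]
    exact lt_min (by linarith) (div_pos (mul_pos hdβ hκ) two_pos)
  have hεα : ε ≤ dα / 2 := by rw [hεdef]; exact min_le_left _ _
  have hεβ : ε ≤ dβ * κ / 2 := by rw [hεdef]; exact min_le_right _ _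
  -- the curve
  set A : ℝ → ℝ := fun t => α + ε * Real.cos φ * Real.arctan t with hAdef
  set c1 : ℝ → ℝ := fun t => ε / (1 + t ^ 2) with hc1def
  have hc1pos : ∀ t, 0 < c1 t := fun t => by
    rw [hc1def]; positivity
  have hc1cont : Continuous c1 := by
    rw [hc1def]
    exact continuous_const.div (by continuity) (fun t => by positivity)
  have hAd : ∀ t, HasDerivAt A (c1 t * Real.cos φ) t := by
    intro t
    have h := ((Real.hasDerivAt_arctan t).const_mul (ε * Real.cos φ)).const_add α
    rw [hAdef, hc1def]
    refine h.congr_deriv ?_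
    beta_reduce
    ring
  have hAcont : Continuous A := by
    rw [hAdef]
    exact continuous_const.add (continuous_const.mul Real.continuous_arctan)
  have hAbound : ∀ t, |A t - α| ≤ dα := by
    intro t
    have he : |A t - α| = ε * |Real.cos φ| * |Real.arctan t| := by
      simp only [hAdef, add_sub_cancel_left, abs_mul, abs_of_pos hε]
    rw [he]
    calc ε * |Real.cos φ| * |Real.arctan t| ≤ ε * 1 * 2 := by
          gcongr
          · exact Real.abs_cos_le_one φ
          · exact myarct t
      _ ≤ dα := by nlinarith
  have hAabs : ∀ t, |A t| ≤ |α| + dα := fun t => by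
    have h3 := abs_sub_abs_le_abs_sub (A t) α
    linarith [hAbound t]
  have hcosA : ∀ t, κ ≤ Real.cos (A t) := by
    intro t
    rw [hκdef, ← Real.cos_abs (A t)]
    apply Real.cos_le_cos_of_nonneg_of_le_pi (abs_nonneg _) _ (hAabs t)
    linarith [Real.pi_pos]
  have hcosApos : ∀ t, 0 < Real.cos (A t) := fun t => lt_of_lt_of_le hκ (hcosA t)
  set g : ℝ → ℝ := fun s => c1 s * Real.sin φ / Real.cos (A s) with hgdef
  have hgcont : Continuous g := by
    rw [hgdef]
    exact (hc1cont.mul continuous_const).div (Real.continuous_cos.comp hAcont)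
      (fun s => ne_of_gt (hcosApos s))
  set B : ℝ → ℝ := fun t => β + ∫ s in (0:ℝ)..t, g s with hBdef
  have hBd : ∀ t, HasDerivAt B (g t) t := by
    intro t
    rw [hBdef]
    exact ((hgcont.integral_hasStrictDerivAt 0 t).hasDerivAt).const_add β
  have hgb : ∀ s, |g s| ≤ ε / κ * (1 + s ^ 2)⁻¹ := by
    intro s
    have hnum : |c1 s * Real.sin φ| ≤ ε / (1 + s ^ 2) := by
      rw [abs_mul]
      calc |c1 s| * |Real.sin φ| ≤ |c1 s| * 1 :=
            mul_le_mul_of_nonneg_left (Real.abs_sin_le_one φ) (abs_nonneg _)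
        _ = ε / (1 + s ^ 2) := by
            rw [mul_one, abs_of_pos (hc1pos s), hc1def]
    have hden : κ ≤ |Real.cos (A s)| := by
      rw [abs_of_pos (hcosApos s)]; exact hcosA s
    have h1 : |g s| ≤ ε / (1 + s ^ 2) / κ := by
      rw [hgdef]
      calc |c1 s * Real.sin φ / Real.cos (A s)|
          = |c1 s * Real.sin φ| / |Real.cos (A s)| := abs_div _ _
        _ ≤ ε / (1 + s ^ 2) / κ :=
            div_le_div₀ (div_nonneg hε.le (by positivity)) hnum hκ hden
    calc |g s| ≤ ε / (1 + s ^ 2) / κ := h1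
      _ = ε / κ * (1 + s ^ 2)⁻¹ := by ring
  have hBbound : ∀ t, |B t - β| ≤ dβ := by
    intro t
    have hB0 : |B t - β| = |∫ s in (0:ℝ)..t, g s| := by
      rw [hBdef]; simp
    rw [hB0]
    have hhcont : Continuous (fun s : ℝ => ε / κ * (1 + s ^ 2)⁻¹) := by
      apply continuous_const.mul
      exact (continuous_const.add (continuous_pow 2)).inv₀ (fun s => by show (1:ℝ) + s ^ 2 ≠ 0; positivity)
    calc |∫ s in (0:ℝ)..t, g s| ≤ |∫ s in (0:ℝ)..t, ε / κ * (1 + s ^ 2)⁻¹| :=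
        myabs_int_le hgcont hhcont hgb t
      _ = ε / κ * |Real.arctan t| := by
          rw [intervalIntegral.integral_const_mul]
          rw [show (∫ s in (0:ℝ)..t, (1 + s ^ 2)⁻¹) = Real.arctan t from by
            simpa using integral_inv_one_add_sq (a := 0) (b := t)]
          rw [abs_mul, abs_of_pos (div_pos hε hκ)]
      _ ≤ ε / κ * 2 := by gcongr; exact myarct t
      _ ≤ dβ := by
          rw [div_mul_eq_mul_div, div_le_iff₀ hκ]
          nlinarith
  have hBabs : ∀ t, |B t| ≤ |β| + dβ := fun t => by
    have h3 := abs_sub_abs_le_abs_sub (B t) β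
    linarith [hBbound t]
  have hMβ : |β| + dβ < Real.pi / 2 := by rw [hdβdef]; linarith
  have hdomAB : ∀ t, InDom (A t) (B t) := by
    intro t
    exact ⟨abs_lt.1 (lt_of_le_of_lt (hAabs t) hMα), abs_lt.1 (lt_of_le_of_lt (hBabs t) hMβ)⟩
  -- C¹ structure
  have hAcd : ContDiff ℝ 1 A := by
    rw [hAdef]
    exact contDiff_const.add (contDiff_const.mul Real.contDiff_arctan)
  have hBcd : ContDiff ℝ 1 B := by
    rw [contDiff_one_iff_deriv]
    refine ⟨fun t => (hBd t).differentiableAt, ?_⟩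
    have hdB : deriv B = g := funext fun t => (hBd t).deriv
    rw [hdB]; exact hgcont
  have hfw : IsFwdHorW2 A B (fun _ => φ) c1 :=
    ⟨hAcd, hBcd, contDiff_const, hc1cont, hc1pos, fun t => hAd t, fun t => hBd t⟩
  obtain ⟨r, hrc, hrpos, hrx, hry⟩ := hhor A B (fun _ => φ) c1 hfw hdomAB
  -- evaluate at 0
  have hA00 : A 0 = α := by rw [hAdef]; simp
  have hB00 : B 0 = β := by rw [hBdef]; simp
  have hcosα : 0 < Real.cos α := Real.cos_pos_of_mem_Ioo ⟨hα1, hα2⟩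
  have hcosβ : 0 < Real.cos β := Real.cos_pos_of_mem_Ioo ⟨hβ1, hβ2⟩
  have hDpos : 0 < a + Real.cos α * Real.cos β := by nlinarith
  have hD : a + Real.cos α * Real.cos β ≠ 0 := ne_of_gt hDpos
  have hcosαne : Real.cos α ≠ 0 := ne_of_gt hcosα
  have hA0d : HasDerivAt A (c1 0 * Real.cos φ) 0 := hAd 0
  have hB0d : HasDerivAt B (c1 0 * Real.sin φ / Real.cos α) 0 := by
    have h := hBd 0
    rw [hgdef] at h
    simpa [hA00] using h
  have hD' : a + Real.cos (A 0) * Real.cos (B 0) ≠ 0 := by rw [hA00, hB00]; exact hD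
  -- derivative of π along the curve
  have hx1 := (hA0d.sin.const_mul (a + c)).div ((hA0d.cos.mul hB0d.cos).const_add a) hD'
  have hx2 := ((hA0d.cos.const_mul (a + c)).mul hB0d.sin).div
    ((hA0d.cos.mul hB0d.cos).const_add a) hD'
  rw [hA00, hB00] at hx1 hx2
  -- derivatives from hhor
  have hfx : (fun s => Px (A s) (B s) φ) = fun s => pi1 a c (A s) (B s) :=
    funext fun s => (hspatial _ _ _ (hdomAB s)).1
  have hfy : (fun s => Py (A s) (B s) φ) = fun s => pi2 a c (A s) (B s) :=
    funext fun s => (hspatial _ _ _ (hdomAB s)).2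
  have h1 := hrx 0
  have h2 := hry 0
  rw [hfx] at h1
  rw [hfy] at h2
  rw [hA00, hB00] at h1 h2
  simp only [pi1] at h1
  simp only [pi2] at h2
  have e1 := h1.unique hx1
  have e2 := h2.unique hx2
  -- pidot values
  have hp1 : pidot1 a c α β φ =
      ((a + c) * Real.cos α * (a + Real.cos α * Real.cos β) -
        (a + c) * Real.sin α * (-Real.sin α * Real.cos β)) /
        (a + Real.cos α * Real.cos β) ^ 2 * Real.cos φ +
      (0 * (a + Real.cos α * Real.cos β) -
        (a + c) * Real.sin α * (Real.cos α * -Real.sin β)) /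
        (a + Real.cos α * Real.cos β) ^ 2 * Real.sin φ / Real.cos α := by
    rw [pidot1, (hd_pi1_a a c α β hD).deriv, (hd_pi1_b a c α β hD).deriv]
  have hp2 : pidot2 a c α β φ =
      ((a + c) * -Real.sin α * Real.sin β * (a + Real.cos α * Real.cos β) -
        (a + c) * Real.cos α * Real.sin β * (-Real.sin α * Real.cos β)) /
        (a + Real.cos α * Real.cos β) ^ 2 * Real.cos φ +
      ((a + c) * Real.cos α * Real.cos β * (a + Real.cos α * Real.cos β) -
        (a + c) * Real.cos α * Real.sin β * (Real.cos α * -Real.sin β)) /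
        (a + Real.cos α * Real.cos β) ^ 2 * Real.sin φ / Real.cos α := by
    rw [pidot2, (hd_pi2_a a c α β hD).deriv, (hd_pi2_b a c α β hD).deriv]
  have key1 : r 0 * Real.cos (Θ α β φ) = c1 0 * pidot1 a c α β φ := by
    rw [e1, hp1]
    simp only [Pi.mul_apply, hA00, hB00]
    field_simp
    ring
  have key2 : r 0 * Real.sin (Θ α β φ) = c1 0 * pidot2 a c α β φ := by
    rw [e2, hp2]
    simp only [Pi.mul_apply, hA00, hB00]
    field_simp
    ring
  -- finish via arg
  have hr0 : 0 < r 0 := hrpos 0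
  have hc10 : 0 < c1 0 := hc1pos 0
  set θ0 := Θ α β φ with hθ0
  have hq1 : pidot1 a c α β φ = r 0 / c1 0 * Real.cos θ0 := by
    field_simp
    linarith [key1]
  have hq2 : pidot2 a c α β φ = r 0 / c1 0 * Real.sin θ0 := by
    field_simp
    linarith [key2]
  have hz : ((pidot1 a c α β φ : ℂ) + (pidot2 a c α β φ : ℂ) * Complex.I) =
      ((r 0 / c1 0 : ℝ) : ℂ) * (Complex.cos θ0 + Complex.sin θ0 * Complex.I) := by
    rw [hq1, hq2]
    push_cast
    ring
  have harg := Complex.arg_mul_cos_add_sin_mul_I_sub (div_pos hr0 hc10) θ0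
  rw [← hz] at harg
  refine ⟨-⌊(Real.pi - θ0) / (2 * Real.pi)⌋, ?_⟩
  push_cast
  linarith [harg]
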